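/- For d ≥ 2 and G_d = √(4π)·Γ((d+1)/2)/Γ(d/2), the identity ∫₀^∞ (1 - (1+t)^{-d/2}) t^{-3/2} dt = G_d holds. -/

import Mathlib

open Real MeasureTheory Set Filter Topology

lemma real_beta {u v : ℝ} (hu : 0 < u) (hv : 0 < v) :
    ∫ x in (0:ℝ)..1, x ^ (u - 1) * (1 - x) ^ (v - 1)
      = Real.Gamma u * Real.Gamma v / Real.Gamma (u + v) := by
  have h := Complex.Gamma_mul_Gamma_eq_betaIntegral (s := (u:ℂ)) (t := (v:ℂ))
    (by simpa using hu) (by simpa using hv)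
  have hbeta : Complex.betaIntegral u v
      = ((∫ x in (0:ℝ)..1, x ^ (u - 1) * (1 - x) ^ (v - 1) : ℝ) : ℂ) := by
    rw [Complex.betaIntegral, ← intervalIntegral.integral_ofReal]
    refine intervalIntegral.integral_congr fun x hx => ?_
    rw [Set.uIcc_of_le zero_le_one] at hx
    push_cast
    rw [Complex.ofReal_cpow hx.1, Complex.ofReal_cpow (by linarith [hx.2])]
    push_cast
    ring
  have hne : Real.Gamma (u + v) ≠ 0 := (Real.Gamma_pos_of_pos (by linarith)).ne'
  rw [hbeta] at h
  have : ((u:ℂ) + v) = ((u + v : ℝ) : ℂ) := by push_cast; ring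
  rw [this, Complex.Gamma_ofReal, Complex.Gamma_ofReal, Complex.Gamma_ofReal,
    ← Complex.ofReal_mul, ← Complex.ofReal_mul] at h
  have h2 := Complex.ofReal_inj.mp h
  field_simp
  linarith [h2]

lemma subst_beta {a : ℝ} (ha : 0 < a) :
    ∫ t in Set.Ioi (0:ℝ), t ^ (-(1/2):ℝ) * (1 + t) ^ (-(a+1))
      = ∫ u in Set.Ioo (0:ℝ) 1, u ^ ((1/2:ℝ) - 1) * (1 - u) ^ ((a + 1/2) - 1) := by
  have himg : (fun u : ℝ => u / (1 - u)) '' (Set.Ioo 0 1) = Set.Ioi 0 := by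
    ext t
    constructor
    · rintro ⟨u, ⟨hu0, hu1⟩, rfl⟩
      exact div_pos hu0 (by linarith)
    · intro ht
      refine ⟨t / (1 + t), ⟨div_pos ht (by linarith [Set.mem_Ioi.mp ht]), ?_⟩, ?_⟩
      · rw [div_lt_one (by linarith [Set.mem_Ioi.mp ht])]; linarith [Set.mem_Ioi.mp ht]
      · have h1t : (0:ℝ) < 1 + t := by linarith [Set.mem_Ioi.mp ht]
        field_simp
        ring
    
  have hderiv : ∀ u ∈ Set.Ioo (0:ℝ) 1, HasDerivWithinAt (fun u : ℝ => u / (1 - u))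
      (((1 - u) ^ 2)⁻¹) (Set.Ioo 0 1) u := by
    intro u hu
    have h1u : (1:ℝ) - u ≠ 0 := by linarith [hu.2]
    have := (hasDerivAt_id u).div ((hasDerivAt_const u 1).sub (hasDerivAt_id u)) h1u
    refine this.hasDerivWithinAt.congr_deriv ?_
    simp only [Pi.sub_apply, id]
    rw [inv_eq_one_div]
    congr 1
    ring
  have hinj : Set.InjOn (fun u : ℝ => u / (1 - u)) (Set.Ioo 0 1) := by
    intro x hx y hy hxy
    have hx1 : (1:ℝ) - x > 0 := by linarith [hx.2]
    have hy1 : (1:ℝ) - y > 0 := by linarith [hy.2]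
    field_simp at hxy
    linarith
  have := MeasureTheory.integral_image_eq_integral_abs_deriv_smul (measurableSet_Ioo)
    hderiv hinj (fun t => t ^ (-(1/2):ℝ) * (1 + t) ^ (-(a+1)))
  rw [himg] at this
  rw [this]
  refine MeasureTheory.setIntegral_congr_fun measurableSet_Ioo fun u hu => ?_
  have hu0 : 0 < u := hu.1
  have hu1 : 0 < 1 - u := by linarith [hu.2]
  have h1 : 1 + u / (1 - u) = (1 - u)⁻¹ := by field_simp; ring
  have h2 : (u / (1 - u)) ^ (-(1/2):ℝ) = u ^ (-(1/2):ℝ) * (1 - u) ^ ((1:ℝ)/2) := by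
    rw [Real.div_rpow hu0.le hu1.le, Real.rpow_neg hu1.le, div_eq_mul_inv, inv_inv]
  have h3 : ((1 - u)⁻¹) ^ (-(a+1)) = (1 - u) ^ (a+1) := by
    rw [← Real.rpow_neg_one (1 - u), ← Real.rpow_mul hu1.le]
    norm_num
  have h4 : ((1 - u) ^ 2)⁻¹ = (1 - u) ^ (-2:ℝ) := by
    rw [← Real.rpow_natCast (1-u) 2, ← Real.rpow_neg hu1.le]
    norm_num
  rw [smul_eq_mul, abs_of_pos (by positivity), h1, h2, h3, h4]
  rw [show u ^ (-(1/2):ℝ) * (1 - u) ^ ((1:ℝ)/2) * (1 - u) ^ (a+1)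
      = u ^ (-(1/2):ℝ) * ((1 - u) ^ ((1:ℝ)/2) * (1 - u) ^ (a+1)) from by ring,
    ← Real.rpow_add hu1, ← mul_assoc, mul_comm ((1-u) ^ (-2:ℝ)), mul_assoc,
    ← Real.rpow_add hu1]
  rw [show ((1:ℝ)/2 - 1) = -(1/2) from by norm_num]
  congr 1
  ring

lemma aux_bound {a t : ℝ} (ha : 1 ≤ a) (ht : 0 ≤ t) :
    1 - (1 + t) ^ (-a) ≤ a * t := by
  have h1t : (0:ℝ) < 1 + t := by linarith
  have hd1 : t / (1 + t) ≤ 1 := by rw [div_le_one h1t]; linarith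
  have hs : (-1:ℝ) ≤ -(t / (1 + t)) := by linarith
  have hb := one_add_mul_self_le_rpow_one_add hs ha
  have he : 1 + -(t / (1 + t)) = (1 + t)⁻¹ := by field_simp; ring
  rw [he, Real.inv_rpow h1t.le, ← Real.rpow_neg h1t.le] at hb
  have hdt : t / (1 + t) ≤ t := div_le_self ht (by linarith)
  have : a * (t / (1 + t)) ≤ a * t := by
    apply mul_le_mul_of_nonneg_left hdt (by linarith)
  nlinarith

lemma aux_nonneg {a t : ℝ} (ha : 0 ≤ a) (ht : 0 ≤ t) :
    0 ≤ 1 - (1 + t) ^ (-a) := by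
  have := Real.rpow_le_one_of_one_le_of_nonpos (by linarith : (1:ℝ) ≤ 1 + t)
    (by linarith : -a ≤ 0)
  linarith

lemma integrableOn_of_bounds {f : ℝ → ℝ} (hc : ContinuousOn f (Set.Ioi 0))
    {c₁ c₂ p q : ℝ} (hp : -1 < p) (hq : q < -1)
    (h1 : ∀ t ∈ Set.Ioc (0:ℝ) 1, ‖f t‖ ≤ c₁ * t ^ p)
    (h2 : ∀ t ∈ Set.Ioi (1:ℝ), ‖f t‖ ≤ c₂ * t ^ q) :
    MeasureTheory.IntegrableOn f (Set.Ioi 0) := by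
  rw [← Set.Ioc_union_Ioi_eq_Ioi (zero_le_one (α := ℝ))]
  refine MeasureTheory.IntegrableOn.union ?_ ?_
  · have hi : IntegrableOn (fun t : ℝ => t ^ p) (Set.Ioc 0 1) := by
      have := intervalIntegral.intervalIntegrable_rpow' (a := (0:ℝ)) (b := 1) hp
      rwa [intervalIntegrable_iff_integrableOn_Ioc_of_le zero_le_one] at this
    refine MeasureTheory.Integrable.mono' (hi.const_mul c₁)
      ((hc.mono Set.Ioc_subset_Ioi_self).aestronglyMeasurable measurableSet_Ioc) ?_
    exact (ae_restrict_iff' measurableSet_Ioc).mpr (ae_of_all _ h1)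
  · have hi : IntegrableOn (fun t : ℝ => t ^ q) (Set.Ioi 1) :=
      integrableOn_Ioi_rpow_of_lt hq one_pos
    refine MeasureTheory.Integrable.mono' (hi.const_mul c₂)
      ((hc.mono (Set.Ioi_subset_Ioi zero_le_one)).aestronglyMeasurable measurableSet_Ioi) ?_
    exact (ae_restrict_iff' measurableSet_Ioi).mpr (ae_of_all _ h2)

lemma main_aux {a : ℝ} (ha1 : 1 ≤ a) :
    ∫ t in Set.Ioi (0:ℝ), (1 - (1 + t) ^ (-a)) * t ^ (-(3/2) : ℝ)
      = 2 * a * ∫ t in Set.Ioi (0:ℝ), t ^ (-(1/2) : ℝ) * (1 + t) ^ (-(a+1)) := by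
  have ha0 : 0 < a := by linarith
  set F : ℝ → ℝ := fun t => (1 - (1 + t) ^ (-a)) * t ^ (-(3/2) : ℝ) with hF
  set B : ℝ → ℝ := fun t => t ^ (-(1/2) : ℝ) * (1 + t) ^ (-(a+1)) with hB
  set G : ℝ → ℝ := fun t => (2 * a) * B t with hG
  set g : ℝ → ℝ := fun t => 2 * t ^ (-(1/2) : ℝ) * ((1 + t) ^ (-a) - 1) with hg
  have hcF : ContinuousOn F (Set.Ioi 0) := by
    apply ContinuousOn.mul
    · exact ContinuousOn.sub continuousOn_const
        (ContinuousOn.rpow_const ((continuous_const.add continuous_id).continuousOn)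
          (fun t ht => Or.inl (by have : (0:ℝ) < t := ht; positivity)))
    · exact ContinuousOn.rpow_const continuousOn_id (fun t ht => Or.inl (ne_of_gt ht))
  have hcB : ContinuousOn B (Set.Ioi 0) := by
    apply ContinuousOn.mul
    · exact ContinuousOn.rpow_const continuousOn_id (fun t ht => Or.inl (ne_of_gt ht))
    · exact ContinuousOn.rpow_const ((continuous_const.add continuous_id).continuousOn)
        (fun t ht => Or.inl (by have : (0:ℝ) < t := ht; positivity))
  have hIntB : IntegrableOn B (Set.Ioi 0) := by
    apply integrableOn_of_bounds hcB (c₁ := 1) (c₂ := 1) (p := -(1/2)) (q := -(5/2))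
      (by norm_num) (by norm_num)
    · intro t ht
      have ht0 : 0 < t := ht.1
      have hb1 : (1 + t) ^ (-(a+1)) ≤ 1 :=
        Real.rpow_le_one_of_one_le_of_nonpos (by linarith) (by linarith)
      have : B t ≤ t ^ (-(1/2):ℝ) := by
        calc B t ≤ t ^ (-(1/2):ℝ) * 1 :=
              mul_le_mul_of_nonneg_left hb1 (Real.rpow_nonneg ht0.le _)
          _ = t ^ (-(1/2):ℝ) := mul_one _
      rw [Real.norm_eq_abs, abs_of_nonneg (by rw [hB]; positivity), one_mul]
      exact this
    · intro t ht
      have ht1 : (1:ℝ) < t := ht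
      have ht0 : (0:ℝ) < t := by linarith
      have hb1 : (1 + t) ^ (-(a+1)) ≤ t ^ (-2:ℝ) := by
        calc (1 + t) ^ (-(a+1)) ≤ (1 + t) ^ (-2:ℝ) :=
              Real.rpow_le_rpow_of_exponent_le (by linarith) (by linarith)
          _ ≤ t ^ (-2:ℝ) := Real.rpow_le_rpow_of_nonpos ht0 (by linarith) (by norm_num)
      have : B t ≤ t ^ (-(5/2):ℝ) := by
        calc B t ≤ t ^ (-(1/2):ℝ) * t ^ (-2:ℝ) :=
              mul_le_mul_of_nonneg_left hb1 (Real.rpow_nonneg ht0.le _)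
          _ = t ^ (-(5/2):ℝ) := by rw [← Real.rpow_add ht0]; norm_num
      rw [Real.norm_eq_abs, abs_of_nonneg (by rw [hB]; positivity), one_mul]
      exact this
  have hIntF : IntegrableOn F (Set.Ioi 0) := by
    apply integrableOn_of_bounds hcF (c₁ := a) (c₂ := 1) (p := -(1/2)) (q := -(3/2))
      (by norm_num) (by norm_num)
    · intro t ht
      have ht0 : 0 < t := ht.1
      have h1 : F t ≤ (a * t) * t ^ (-(3/2):ℝ) :=
        mul_le_mul_of_nonneg_right (aux_bound ha1 ht0.le) (Real.rpow_nonneg ht0.le _)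
      have h2 : (a * t) * t ^ (-(3/2):ℝ) = a * t ^ (-(1/2):ℝ) := by
        rw [mul_assoc]
        congr 1
        nth_rewrite 1 [← Real.rpow_one t]
        rw [← Real.rpow_add ht0]; norm_num
      rw [Real.norm_eq_abs, abs_of_nonneg (by
        rw [hF]
        exact mul_nonneg (aux_nonneg ha0.le ht0.le) (Real.rpow_nonneg ht0.le _))]
      linarith
    · intro t ht
      have ht0 : (0:ℝ) < t := lt_trans one_pos ht
      have h1 : F t ≤ 1 * t ^ (-(3/2):ℝ) :=
        mul_le_mul_of_nonneg_right (by
          have := Real.rpow_nonneg (by linarith : (0:ℝ) ≤ 1 + t) (-a); linarith)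
          (Real.rpow_nonneg ht0.le _)
      rw [Real.norm_eq_abs, abs_of_nonneg (by
        rw [hF]
        exact mul_nonneg (aux_nonneg ha0.le ht0.le) (Real.rpow_nonneg ht0.le _))]
      exact h1
  have hIntG : IntegrableOn G (Set.Ioi 0) := hIntB.const_mul _
  have hderiv : ∀ t ∈ Set.Ioi (0:ℝ), HasDerivAt g (F t - G t) t := by
    intro t ht
    have ht0 : (0:ℝ) < t := ht
    have h1t : (0:ℝ) < 1 + t := by linarith
    have h1 : HasDerivAt (fun x : ℝ => x ^ (-(1/2):ℝ)) (-(1/2) * t ^ (-(1/2) - 1 : ℝ)) t :=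
      Real.hasDerivAt_rpow_const (Or.inl (ne_of_gt ht0))
    have h2 : HasDerivAt (fun x : ℝ => (1 + x) ^ (-a)) (-a * (1 + t) ^ (-a - 1) * (0 + 1)) t :=
      (Real.hasDerivAt_rpow_const (x := 1 + t) (p := -a) (Or.inl (ne_of_gt h1t))).comp t
        ((hasDerivAt_const t 1).add (hasDerivAt_id t))
    have h3 := (h1.const_mul 2).mul (h2.sub_const 1)
    refine h3.congr_deriv ?_
    rw [hF, hG, hB]
    rw [show (-(1/2) - 1 : ℝ) = -(3/2) from by norm_num,
      show (-a - 1 : ℝ) = -(a+1) from by ring]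
    ring
  have hg0 : g 0 = 0 := by norm_num [hg]
  have hcont : ContinuousWithinAt g (Set.Ici 0) 0 := by
    rw [← continuousWithinAt_Ioi_iff_Ici]
    have hda : HasDerivAt (fun x : ℝ => (1 + x) ^ (-a)) (-a * (1 + 0) ^ (-a - 1) * (0 + 1)) 0 :=
      (Real.hasDerivAt_rpow_const (x := 1 + 0) (p := -a) (Or.inl (by norm_num))).comp 0
        ((hasDerivAt_const 0 1).add (hasDerivAt_id 0))
    have hslope := hasDerivAt_iff_tendsto_slope.mp hda
    have hmono : 𝓝[>] (0:ℝ) ≤ 𝓝[≠] 0 := nhdsWithin_mono 0 (fun x hx => ne_of_gt hx)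
    have h12 : Tendsto (fun t : ℝ => 2 * t ^ ((1:ℝ)/2)) (𝓝[>] 0) (𝓝 (2 * (0:ℝ) ^ ((1:ℝ)/2))) :=
      (((Real.continuousAt_rpow_const 0 (1/2) (Or.inr (by norm_num))).tendsto).mono_left
        nhdsWithin_le_nhds).const_mul 2
    have hprod := h12.mul (hslope.mono_left hmono)
    have hlim : Tendsto (fun t : ℝ => 2 * t ^ ((1:ℝ)/2) * slope (fun x : ℝ => (1 + x) ^ (-a)) 0 t)
        (𝓝[>] 0) (𝓝 0) := by
      convert hprod using 2
      rw [Real.zero_rpow (by norm_num)]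
      ring
    unfold ContinuousWithinAt
    rw [hg0]
    refine Tendsto.congr' ?_ hlim
    filter_upwards [self_mem_nhdsWithin] with t ht
    have ht0 : (0:ℝ) < t := ht
    have hts : t ^ (-(1/2):ℝ) = t ^ ((1:ℝ)/2) / t := by
      rw [eq_div_iff (ne_of_gt ht0)]
      nth_rewrite 2 [← Real.rpow_one t]
      rw [← Real.rpow_add ht0]; norm_num
    rw [slope_def_field, hg]
    simp only
    rw [show ((1:ℝ)+0) = 1 from by norm_num, Real.one_rpow, sub_zero, hts]
    ring
  have htop : Tendsto g atTop (𝓝 0) := by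
    have h1 : Tendsto (fun t : ℝ => 2 * t ^ (-(1/2):ℝ)) atTop (𝓝 (2 * 0)) :=
      (tendsto_rpow_neg_atTop (by norm_num)).const_mul 2
    have h2 : Tendsto (fun t : ℝ => (1 + t) ^ (-a) - 1) atTop (𝓝 (0 - 1)) := by
      apply Tendsto.sub_const
      exact (tendsto_rpow_neg_atTop ha0).comp (tendsto_atTop_add_const_left _ 1 tendsto_id)
    have := h1.mul h2
    rw [hg]
    convert this using 2 <;> norm_num
  have key := MeasureTheory.integral_Ioi_of_hasDerivAt_of_tendsto hcont hderiv
    (hIntF.sub hIntG) htop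
  rw [MeasureTheory.integral_sub hIntF hIntG, hg0, zero_sub, neg_zero, sub_eq_zero] at key
  calc ∫ t in Set.Ioi (0:ℝ), (1 - (1 + t) ^ (-a)) * t ^ (-(3/2) : ℝ) = ∫ t in Set.Ioi (0:ℝ), F t := rfl
    _ = ∫ t in Set.Ioi (0:ℝ), G t := key
    _ = (2*a) * ∫ t in Set.Ioi (0:ℝ), B t := MeasureTheory.integral_const_mul _ _
    _ = 2 * a * ∫ t in Set.Ioi (0:ℝ), t ^ (-(1/2) : ℝ) * (1 + t) ^ (-(a+1)) := rfl

theorem stmt_9 (d : ℝ) (hd : 2 ≤ d) :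
    ∫ t in Set.Ioi (0 : ℝ), (1 - (1 + t) ^ (-(d / 2))) * t ^ (-(3 / 2) : ℝ)
      = Real.sqrt (4 * π) * Real.Gamma ((d + 1) / 2) / Real.Gamma (d / 2) := by
  have ha1 : 1 ≤ d / 2 := by linarith
  have ha0 : 0 < d / 2 := by linarith
  rw [main_aux ha1, subst_beta ha0]
  have h1 : (∫ u in Set.Ioo (0:ℝ) 1, u ^ ((1/2:ℝ) - 1) * (1 - u) ^ ((d/2 + 1/2) - 1))
      = ∫ u in (0:ℝ)..1, u ^ ((1/2:ℝ) - 1) * (1 - u) ^ ((d/2 + 1/2) - 1) := by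
    rw [intervalIntegral.integral_of_le zero_le_one,
      MeasureTheory.integral_Ioc_eq_integral_Ioo]
  rw [h1, real_beta (u := 1/2) (v := d/2 + 1/2) (by norm_num) (by linarith)]
  rw [Real.Gamma_one_half_eq]
  rw [show (1/2 : ℝ) + (d/2 + 1/2) = d/2 + 1 from by ring,
    Real.Gamma_add_one (ne_of_gt ha0),
    show (d/2 + 1/2 : ℝ) = (d+1)/2 from by ring]
  have hG : Real.Gamma (d/2) ≠ 0 := (Real.Gamma_pos_of_pos ha0).ne'
  have hsq : Real.sqrt (4*π) = 2 * Real.sqrt π := by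
    rw [show (4:ℝ)*π = 2^2 * π from by ring, Real.sqrt_mul (by positivity),
      Real.sqrt_sq (by norm_num)]
  rw [hsq]
  have hd0 : (d/2 : ℝ) ≠ 0 := ne_of_gt ha0
  field_simp
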